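/- Let k, q, N ∈ ℕ. For each i ∈ [q], let A_i, B_i : [N] → ℝ^{k×k} and let g_i : ℕ → {0,1}. Let Γ : {0,1}^q → {0,1} and define P ∈ {0,1}^{N×N} by P(x,y) = Γ(g_1(rank(A_1(x)+B_1(y))), …, g_q(rank(A_q(x)+B_q(y)))). Then P is a rank problem of order (k+1)^q − 1: there exist a, b ∈ ℕ, maps A, B : [N] → ℝ^{a×b}, and g : ℕ → {0,1} constant on inputs ≥ (k+1)^q − 1, such that P(x,y) = g(rank(A(x)+B(y))) for all x,y. Moreover, if B_i(x) = −A_i(x) for all i and x, then A and B can be chosen with B(x) = −A(x) for all x. -/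

import Mathlib

open Matrix


noncomputable def prodSubEquiv {R M M' : Type*} [Ring R] [AddCommGroup M] [AddCommGroup M']
    [Module R M] [Module R M'] (p : Submodule R M) (p' : Submodule R M') :
    (p.prod p') ≃ₗ[R] p × p' where
  toFun x := (⟨x.1.1, (Submodule.mem_prod.mp x.2).1⟩, ⟨x.1.2, (Submodule.mem_prod.mp x.2).2⟩)
  invFun x := ⟨(x.1.1, x.2.1), Submodule.mem_prod.mpr ⟨x.1.2, x.2.2⟩⟩
  map_add' x y := rfl
  map_smul' c x := rfl
  left_inv x := rfl
  right_inv x := rfl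

lemma rank_fromBlocksZero {l m n o : Type*} [Fintype l] [Fintype m] [Fintype n] [Fintype o]
    (A : Matrix n l ℝ) (D : Matrix o m ℝ) :
    (fromBlocks A 0 0 D).rank = A.rank + D.rank := by
  classical
  set E := LinearEquiv.sumArrowLequivProdArrow n o ℝ ℝ with hE
  have key : ∀ v : l ⊕ m → ℝ, E ((fromBlocks A 0 0 D).mulVecLin v)
      = (A *ᵥ (v ∘ Sum.inl), D *ᵥ (v ∘ Sum.inr)) := by
    intro v
    rw [mulVecLin_apply, fromBlocks_mulVec]
    refine Prod.ext ?_ ?_ <;> funext i <;>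
      simp [hE, LinearEquiv.sumArrowLequivProdArrow]
  have hmap : Submodule.map (E : ((n ⊕ o) → ℝ) →ₗ[ℝ] (n → ℝ) × (o → ℝ))
      (LinearMap.range (fromBlocks A 0 0 D).mulVecLin)
      = (LinearMap.range A.mulVecLin).prod (LinearMap.range D.mulVecLin) := by
    ext z
    simp only [Submodule.mem_map, LinearMap.mem_range, Submodule.mem_prod]
    constructor
    · rintro ⟨-, ⟨v, rfl⟩, rfl⟩
      rw [LinearEquiv.coe_coe, key]
      exact ⟨⟨v ∘ Sum.inl, by simp⟩, ⟨v ∘ Sum.inr, by simp⟩⟩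
    · rintro ⟨⟨x, hx⟩, ⟨y, hy⟩⟩
      refine ⟨(fromBlocks A 0 0 D).mulVecLin (Sum.elim x y), ⟨_, rfl⟩, ?_⟩
      rw [LinearEquiv.coe_coe, key]
      simp only [Sum.elim_comp_inl, Sum.elim_comp_inr]
      rw [mulVecLin_apply] at hx hy
      rw [hx, hy]
  have := LinearEquiv.finrank_map_eq E (LinearMap.range (fromBlocks A 0 0 D).mulVecLin)
  rw [Matrix.rank, Matrix.rank, Matrix.rank, ← this, hmap,
    (prodSubEquiv _ _).finrank_eq, Module.finrank_prod]

noncomputable def copiesAux {n : ℕ} : (c : ℕ) → Matrix (Fin n) (Fin n) ℝ →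
    Matrix (Fin (c * n)) (Fin (c * n)) ℝ
  | 0, _ => 0
  | c + 1, M =>
    (reindex (finSumFinEquiv.trans (finCongr (Nat.succ_mul c n).symm))
      (finSumFinEquiv.trans (finCongr (Nat.succ_mul c n).symm)))
      (fromBlocks (copiesAux c M) 0 0 M)

lemma copiesAux_add {n : ℕ} (c : ℕ) (M N : Matrix (Fin n) (Fin n) ℝ) :
    copiesAux c (M + N) = copiesAux c M + copiesAux c N := by
  induction c with
  | zero => simp [copiesAux]
  | succ c ih =>
    have h : fromBlocks (copiesAux c M + copiesAux c N) 0 0 (M + N)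
        = fromBlocks (copiesAux c M) 0 0 M + fromBlocks (copiesAux c N) 0 0 N := by
      rw [fromBlocks_add]; simp
    simp only [copiesAux, ih, reindex_apply, h, submatrix_add, Pi.add_apply]


lemma copiesAux_neg {n : ℕ} (c : ℕ) (M : Matrix (Fin n) (Fin n) ℝ) :
    copiesAux c (-M) = -copiesAux c M := by
  induction c with
  | zero => simp [copiesAux]
  | succ c ih =>
    have h : fromBlocks (-copiesAux c M) 0 0 (-M)
        = -fromBlocks (copiesAux c M) 0 0 M := by
      rw [fromBlocks_neg]; simp
    simp only [copiesAux, ih, reindex_apply, h, submatrix_neg, Pi.neg_apply]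

lemma rank_copiesAux {n : ℕ} (c : ℕ) (M : Matrix (Fin n) (Fin n) ℝ) :
    (copiesAux c M).rank = c * M.rank := by
  induction c with
  | zero => simp [copiesAux, Matrix.rank_zero]
  | succ c ih =>
    rw [copiesAux, rank_reindex, rank_fromBlocksZero, ih, Nat.succ_mul]

def bsize (k : ℕ) : ℕ → ℕ
  | 0 => 0
  | q + 1 => k + (k + 1) * bsize k q

noncomputable def buildAux (k : ℕ) : (q : ℕ) → (Fin q → Matrix (Fin k) (Fin k) ℝ) →
    Matrix (Fin (bsize k q)) (Fin (bsize k q)) ℝ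
  | 0, _ => 0
  | q + 1, M =>
    (reindex finSumFinEquiv finSumFinEquiv)
      (fromBlocks (M 0) 0 0 (copiesAux (k + 1) (buildAux k q (fun i => M i.succ))))

lemma buildAux_add (k : ℕ) : ∀ (q : ℕ) (M N : Fin q → Matrix (Fin k) (Fin k) ℝ),
    buildAux k q (fun i => M i + N i) = buildAux k q M + buildAux k q N := by
  intro q
  induction q with
  | zero => intro M N; simp [buildAux]
  | succ q ih =>
    intro M N
    have h1 : (fun i => M i.succ + N i.succ) = (fun i : Fin q => (fun j => M j + N j) i.succ) := rfl
    have h : fromBlocks (M 0 + N 0) 0 0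
          (copiesAux (k + 1) (buildAux k q fun i => M i.succ)
            + copiesAux (k + 1) (buildAux k q fun i => N i.succ))
        = fromBlocks (M 0) 0 0 (copiesAux (k + 1) (buildAux k q fun i => M i.succ))
          + fromBlocks (N 0) 0 0 (copiesAux (k + 1) (buildAux k q fun i => N i.succ)) := by
      rw [fromBlocks_add]; simp
    simp only [buildAux, ← h1, ih, copiesAux_add, reindex_apply, h, submatrix_add, Pi.add_apply]
    rfl

lemma buildAux_neg (k : ℕ) : ∀ (q : ℕ) (M : Fin q → Matrix (Fin k) (Fin k) ℝ),
    buildAux k q (fun i => -(M i)) = -buildAux k q M := by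
  intro q
  induction q with
  | zero => intro M; simp [buildAux]
  | succ q ih =>
    intro M
    have h1 : (fun i => -(M i.succ)) = (fun i : Fin q => (fun j => -(M j)) i.succ) := rfl
    have h : fromBlocks (-(M 0)) 0 0
          (-copiesAux (k + 1) (buildAux k q fun i => M i.succ))
        = -fromBlocks (M 0) 0 0 (copiesAux (k + 1) (buildAux k q fun i => M i.succ)) := by
      rw [fromBlocks_neg]; simp
    simp only [buildAux, ← h1, ih, copiesAux_neg, reindex_apply, h, submatrix_neg, Pi.neg_apply]
    rfl

lemma rank_buildAux (k : ℕ) : ∀ (q : ℕ) (M : Fin q → Matrix (Fin k) (Fin k) ℝ),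
    (buildAux k q M).rank = ∑ i : Fin q, (M i).rank * (k + 1) ^ (i : ℕ) := by
  intro q
  induction q with
  | zero => intro M; simp [buildAux, Matrix.rank_zero]
  | succ q ih =>
    intro M
    rw [buildAux, reindex_apply]
    erw [rank_submatrix]
    rw [rank_fromBlocksZero, rank_copiesAux, ih, Fin.sum_univ_succ]
    simp only [Fin.val_zero, pow_zero, mul_one, Fin.val_succ, pow_succ, Finset.mul_sum]
    congr 1
    refine Finset.sum_congr rfl fun i _ => by ring

lemma gsum (k : ℕ) : ∀ q : ℕ, ∑ i : Fin q, k * (k + 1) ^ (i : ℕ) = (k + 1) ^ q - 1 := by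
  intro q
  induction q with
  | zero => simp
  | succ q ih =>
    rw [Fin.sum_univ_castSucc]
    simp only [Fin.coe_castSucc, Fin.val_last]
    rw [ih, pow_succ]
    have h1 : 1 ≤ (k + 1) ^ q := Nat.one_le_pow _ _ (Nat.succ_pos k)
    have h2 : (k + 1) ^ q * (k + 1) = (k + 1) ^ q + k * (k + 1) ^ q := by ring
    omega

theorem stmt12 (k q N : ℕ)
    (A B : Fin q → Fin N → Matrix (Fin k) (Fin k) ℝ)
    (g : Fin q → ℕ → Bool)
    (Γ : (Fin q → Bool) → Bool)
    (P : Matrix (Fin N) (Fin N) Bool)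
    (hP : ∀ x y, P x y = Γ (fun i => g i ((A i x + B i y).rank))) :
    ∃ (a b : ℕ) (A' B' : Fin N → Matrix (Fin a) (Fin b) ℝ) (g' : ℕ → Bool),
      (∀ m, (k + 1) ^ q - 1 ≤ m → g' m = g' ((k + 1) ^ q - 1)) ∧
      (∀ x y, P x y = g' ((A' x + B' y).rank)) ∧
      ((∀ i x, B i x = -A i x) → ∀ x, B' x = -A' x) := by
  classical
  have hpos : 1 ≤ (k + 1) ^ q := Nat.one_le_pow _ _ (Nat.succ_pos k)
  have hK : (k + 1) ^ q - 1 < (k + 1) ^ q := by omega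
  refine ⟨bsize k q, bsize k q, fun x => buildAux k q (fun i => A i x),
    fun y => buildAux k q (fun i => B i y),
    fun m => if h : m < (k + 1) ^ q then
        Γ (fun i => g i ((finFunctionFinEquiv.symm ⟨m, h⟩ i : Fin (k + 1)) : ℕ))
      else Γ (fun i => g i k),
    ?_, ?_, ?_⟩
  · intro m hm
    dsimp only
    by_cases h : m < (k + 1) ^ q
    · have : m = (k + 1) ^ q - 1 := by omega
      subst this
      rfl
    · rw [dif_neg h, dif_pos hK]
      have hdec : finFunctionFinEquiv.symm ⟨(k + 1) ^ q - 1, hK⟩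
          = fun _ : Fin q => (⟨k, Nat.lt_succ_self k⟩ : Fin (k + 1)) := by
        rw [Equiv.symm_apply_eq]
        apply Fin.ext
        rw [finFunctionFinEquiv_apply]
        exact (gsum k q).symm
      rw [hdec]
  · intro x y
    dsimp only
    have hr : ∀ i : Fin q, (A i x + B i y).rank < k + 1 :=
      fun i => Nat.lt_succ_of_le (rank_le_height _)
    set r : Fin q → Fin (k + 1) := fun i => ⟨(A i x + B i y).rank, hr i⟩ with hrdef
    have hsum : buildAux k q (fun i => A i x) + buildAux k q (fun i => B i y)
        = buildAux k q (fun i => A i x + B i y) := (buildAux_add k q _ _).symm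
    have hrank : (buildAux k q (fun i => A i x + B i y)).rank
        = ((finFunctionFinEquiv r : Fin ((k + 1) ^ q)) : ℕ) := by
      rw [rank_buildAux, finFunctionFinEquiv_apply]
    rw [hsum, hrank, dif_pos (Fin.is_lt _), hP]
    congr 1
    funext i
    congr 1
    have : (⟨((finFunctionFinEquiv r : Fin ((k + 1) ^ q)) : ℕ), Fin.is_lt _⟩
        : Fin ((k + 1) ^ q)) = finFunctionFinEquiv r := Fin.eta _ _
    rw [this, Equiv.symm_apply_apply, hrdef]
  · intro hBA x
    dsimp only
    have h : (fun i => B i x) = fun i => -(A i x) := funext fun i => hBA i x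
    rw [h, buildAux_neg]
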